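/- Let m ≥ 4 and let v : ZMod m → ℝ² be the vertices of the regular m-gon, v(j) = (cos(2π·j.val/m), sin(2π·j.val/m)). Let {a,b} and {c,d} be diagonals of the m-gon with a, b, c, d pairwise distinct. Then the open segments openSegment ℝ (v a) (v b) and openSegment ℝ (v c) (v d) have a common point if and only if the diagonals {a,b} and {c,d} cross combinatorially. -/

import Mathlib

open Real

set_option maxHeartbeats 1000000


/-- `e` is a diagonal of the `m`-gon with vertex set `ZMod m`:
a 2-element set `{a, b}` with `b ∉ {a, a + 1, a - 1}`. -/
def IsDiag (m : ℕ) (e : Finset (ZMod m)) : Prop :=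
  ∃ a b : ZMod m, e = {a, b} ∧ b ≠ a ∧ b ≠ a + 1 ∧ b ≠ a - 1

/-- `x` lies in the open cyclic arc `{a+1, a+2, …, b-1}` from `a` to `b`. -/
def InArc (m : ℕ) (a b x : ZMod m) : Prop :=
  0 < (x - a).val ∧ (x - a).val < (b - a).val

/-- The diagonals `{a,b}` and `{c,d}` cross: the four points are pairwise
distinct and exactly one of `c, d` lies in the open arc from `a` to `b`. -/
def CrossPts (m : ℕ) (a b c d : ZMod m) : Prop :=
  ([a, b, c, d] : List (ZMod m)).Pairwise (· ≠ ·) ∧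
    Xor' (InArc m a b c) (InArc m a b d)

/-- Crossing of diagonals, as unordered pairs. -/
def Cross (m : ℕ) (e f : Finset (ZMod m)) : Prop :=
  ∃ a b c d : ZMod m, e = {a, b} ∧ f = {c, d} ∧ CrossPts m a b c d

/-- `A` is a set of pairwise non-crossing diagonals of the `m`-gon. -/
def NonCrossingSet (m : ℕ) (A : Set (Finset (ZMod m))) : Prop :=
  (∀ e ∈ A, IsDiag m e) ∧ ∀ e ∈ A, ∀ f ∈ A, ¬ Cross m e f

/-- The vertices of the regular `m`-gon in the plane. -/
noncomputable def regVertex (m : ℕ) (j : ZMod m) : ℝ × ℝ :=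
  (Real.cos (2 * Real.pi * j.val / m), Real.sin (2 * Real.pi * j.val / m))

/-- For diagonals `{a,b}` and `{c,d}` of the `m`-gon with
`a, b, c, d` pairwise distinct, the open segments joining the corresponding
vertices of the regular `m`-gon meet if and only if the diagonals cross
combinatorially. -/


noncomputable def segF (p q r : ℝ × ℝ) : ℝ :=
  (q.1 - p.1) * (r.2 - p.2) - (q.2 - p.2) * (r.1 - p.1)

private lemma trig_id (x y : ℝ) :
    Real.sin (2*x) + Real.sin (2*(y-x)) - Real.sin (2*y)
      = 4 * Real.sin x * Real.sin y * Real.sin (y - x) := by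
  rw [Real.sin_two_mul, Real.sin_two_mul, Real.sin_two_mul, Real.sin_sub, Real.cos_sub]
  linear_combination 2*Real.sin y*Real.cos y*(Real.sin_sq_add_cos_sq x) - 2*Real.sin x*Real.cos x*(Real.sin_sq_add_cos_sq y)

lemma sub_val_dvd (m : ℕ) [NeZero m] (j k : ZMod m) :
    (m:ℤ) ∣ ((j.val : ℤ) - k.val) - ((j - k).val : ℤ) := by
  apply (ZMod.intCast_zmod_eq_zero_iff_dvd _ _).mp
  push_cast
  simp [ZMod.natCast_val, ZMod.cast_id]

lemma sin_congr (m : ℕ) (hm : 0 < m) (u v : ℤ) (h : (m:ℤ) ∣ u - v) :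
    Real.sin (2*π*u/m) = Real.sin (2*π*v/m) := by
  obtain ⟨n, hn⟩ := h
  have hmR : (m:ℝ) ≠ 0 := Nat.cast_ne_zero.mpr hm.ne'
  have hu' : u = v + m*n := by linarith
  have hu : (u:ℝ) = v + m*n := by exact_mod_cast congrArg (fun z : ℤ => (z : ℝ)) hu'
  have : (2*π*u/m : ℝ) = 2*π*v/m + n * (2*π) := by
    rw [hu]; field_simp
  rw [this, Real.sin_add_int_mul_two_pi]

lemma segF_regVertex (m : ℕ) (hm : 0 < m) (a b c : ZMod m) :
    segF (regVertex m a) (regVertex m b) (regVertex m c)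
      = 4 * Real.sin (π * (b-a).val / m) * Real.sin (π * (c-a).val / m)
          * Real.sin (π * (c-a).val / m - π * (b-a).val / m) := by
  haveI : NeZero m := ⟨hm.ne'⟩
  have hmR : (m:ℝ) ≠ 0 := Nat.cast_ne_zero.mpr hm.ne'
  have h1 : segF (regVertex m a) (regVertex m b) (regVertex m c)
      = Real.sin (2*π*((b.val:ℝ)-a.val)/m) + Real.sin (2*π*((c.val:ℝ)-b.val)/m)
        + Real.sin (2*π*((a.val:ℝ)-c.val)/m) := by
    have e1 : (2*π*((b.val:ℝ)-a.val)/m) = 2*π*b.val/m - 2*π*a.val/m := by field_simp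
    have e2 : (2*π*((c.val:ℝ)-b.val)/m) = 2*π*c.val/m - 2*π*b.val/m := by field_simp
    have e3 : (2*π*((a.val:ℝ)-c.val)/m) = 2*π*a.val/m - 2*π*c.val/m := by field_simp
    rw [e1, e2, e3]
    simp only [segF, regVertex, Real.sin_sub, Real.cos_sub]
    ring
  have d1 : (m:ℤ) ∣ ((b.val:ℤ) - a.val) - ((b-a).val : ℤ) := sub_val_dvd m b a
  have d2 : (m:ℤ) ∣ ((c.val:ℤ) - a.val) - ((c-a).val : ℤ) := sub_val_dvd m c a
  have d3 : (m:ℤ) ∣ ((c.val:ℤ) - b.val) - (((c-a).val:ℤ) - ((b-a).val:ℤ)) := by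
    have h := dvd_sub d2 d1
    have e : (((c.val:ℤ) - a.val) - ((c-a).val : ℤ)) - (((b.val:ℤ) - a.val) - ((b-a).val : ℤ)) = ((c.val:ℤ) - b.val) - (((c-a).val:ℤ) - ((b-a).val:ℤ)) := by ring
    rw [e] at h; exact h
  have d4 : (m:ℤ) ∣ ((a.val:ℤ) - c.val) - (-((c-a).val:ℤ)) := by
    have h := dvd_neg.mpr d2
    have e : -(((c.val:ℤ) - a.val) - ((c-a).val : ℤ)) = ((a.val:ℤ) - c.val) - (-((c-a).val:ℤ)) := by ring
    rw [e] at h; exact h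
  have s1 := sin_congr m hm ((b.val:ℤ) - a.val) ((b-a).val) d1
  have s3 := sin_congr m hm ((c.val:ℤ) - b.val) (((c-a).val:ℤ) - ((b-a).val:ℤ)) d3
  have s4 := sin_congr m hm ((a.val:ℤ) - c.val) (-((c-a).val:ℤ)) d4
  push_cast at s1 s3 s4
  rw [h1, s1, s3, s4]
  have e5 : (2*π*((b-a).val:ℝ)/m) = 2*(π*(b-a).val/m) := by ring
  have e6 : (2*π*(((c-a).val:ℝ)-((b-a).val:ℝ))/m)
      = 2*((π*(c-a).val/m) - (π*(b-a).val/m)) := by ring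
  have e7 : (2*π*(-((c-a).val:ℝ))/m) = -(2*(π*(c-a).val/m)) := by ring
  rw [e5, e6, e7, Real.sin_neg]
  have h := trig_id (π*((b-a).val:ℝ)/m) (π*((c-a).val:ℝ)/m)
  linarith [h]


lemma sin_pos_nat (m n : ℕ) (h0 : 0 < n) (h1 : n < m) : 0 < Real.sin (π * n / m) := by
  have hm : (0:ℝ) < m := by exact_mod_cast h0.trans h1
  have hn : (0:ℝ) < n := by exact_mod_cast h0
  apply Real.sin_pos_of_pos_of_lt_pi
  · exact div_pos (mul_pos Real.pi_pos hn) hm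
  · rw [div_lt_iff₀ hm]
    have : (n:ℝ) < m := by exact_mod_cast h1
    nlinarith [Real.pi_pos]

lemma val_sub_ne (m : ℕ) [NeZero m] {a b c : ZMod m} (h : b ≠ c) :
    (b - a).val ≠ (c - a).val := by
  intro hEq
  apply h
  have hb : ((b - a).val : ZMod m) = b - a := ZMod.natCast_val _ |>.trans (ZMod.cast_id _ _)
  have hc : ((c - a).val : ZMod m) = c - a := ZMod.natCast_val _ |>.trans (ZMod.cast_id _ _)
  have : b - a = c - a := by rw [← hb, ← hc, hEq]
  exact sub_left_inj.mp this

lemma sin_pos_real (m : ℕ) (x : ℝ) (h0 : 0 < x) (h1 : x < m) : 0 < Real.sin (π * x / m) := by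
  have hm : (0:ℝ) < m := h0.trans h1
  apply Real.sin_pos_of_pos_of_lt_pi
  · exact div_pos (mul_pos Real.pi_pos h0) hm
  · rw [div_lt_iff₀ hm]; nlinarith [Real.pi_pos]

lemma segF_cases (m : ℕ) [NeZero m] (a b c : ZMod m)
    (hba : b ≠ a) (hca : c ≠ a) (hcb : c ≠ b) :
    (InArc m a b c ∧ segF (regVertex m a) (regVertex m b) (regVertex m c) < 0) ∨
    (¬ InArc m a b c ∧ 0 < segF (regVertex m a) (regVertex m b) (regVertex m c)) := by
  have hm : 0 < m := Nat.pos_of_ne_zero (NeZero.ne m)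
  rw [segF_regVertex m hm]
  have hα0 : 0 < (b-a).val := ZMod.val_pos.mpr (sub_ne_zero.mpr hba)
  have hα1 : (b-a).val < m := ZMod.val_lt _
  have hγ0 : 0 < (c-a).val := ZMod.val_pos.mpr (sub_ne_zero.mpr hca)
  have hγ1 : (c-a).val < m := ZMod.val_lt _
  have hne : (c-a).val ≠ (b-a).val := val_sub_ne m hcb
  have S1 : 0 < Real.sin (π*((b-a).val:ℝ)/m) :=
    sin_pos_real m _ (by exact_mod_cast hα0) (by exact_mod_cast hα1)
  have S2 : 0 < Real.sin (π*((c-a).val:ℝ)/m) :=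
    sin_pos_real m _ (by exact_mod_cast hγ0) (by exact_mod_cast hγ1)
  rcases lt_or_gt_of_ne hne with hlt | hgt
  · left
    have S3 : 0 < Real.sin (π*((b-a).val:ℝ)/m - π*((c-a).val:ℝ)/m) := by
      have e : π*((b-a).val:ℝ)/m - π*((c-a).val:ℝ)/m
          = π*(((b-a).val:ℝ) - ((c-a).val:ℝ))/m := by ring
      rw [e]; apply sin_pos_real m
      · have h : ((c-a).val:ℝ) < ((b-a).val:ℝ) := by exact_mod_cast hlt
        linarith
      · have h1 : ((b-a).val:ℝ) < m := by exact_mod_cast hα1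
        have h2 : (0:ℝ) ≤ ((c-a).val:ℝ) := by positivity
        linarith
    have S3' : Real.sin (π*((c-a).val:ℝ)/m - π*((b-a).val:ℝ)/m) < 0 := by
      rw [show π*((c-a).val:ℝ)/m - π*((b-a).val:ℝ)/m
          = -(π*((b-a).val:ℝ)/m - π*((c-a).val:ℝ)/m) by ring, Real.sin_neg]
      linarith
    exact ⟨⟨hγ0, hlt⟩, by nlinarith [mul_neg_of_pos_of_neg (mul_pos S1 S2) S3']⟩
  · right
    have S3 : 0 < Real.sin (π*((c-a).val:ℝ)/m - π*((b-a).val:ℝ)/m) := by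
      have e : π*((c-a).val:ℝ)/m - π*((b-a).val:ℝ)/m
          = π*(((c-a).val:ℝ) - ((b-a).val:ℝ))/m := by ring
      rw [e]; apply sin_pos_real m
      · have h : ((b-a).val:ℝ) < ((c-a).val:ℝ) := by exact_mod_cast hgt
        linarith
      · have h1 : ((c-a).val:ℝ) < m := by exact_mod_cast hγ1
        have h2 : (0:ℝ) ≤ ((b-a).val:ℝ) := by positivity
        linarith
    refine ⟨fun h => ?_, by nlinarith [mul_pos (mul_pos S1 S2) S3]⟩
    exact absurd h.2 (by omega)

lemma mem_openSegment_iff' {u v x : ℝ × ℝ} :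
    x ∈ openSegment ℝ u v ↔ ∃ s t : ℝ, 0 < s ∧ 0 < t ∧ s + t = 1 ∧ s • u + t • v = x :=
  Iff.rfl

lemma segF_affine (p q u v : ℝ × ℝ) (s t : ℝ) (h : s + t = 1) :
    segF p q (s • u + t • v) = s * segF p q u + t * segF p q v := by
  have hs : s = 1 - t := by linarith
  subst hs
  simp only [segF, Prod.smul_fst, Prod.smul_snd, Prod.fst_add, Prod.snd_add, smul_eq_mul]
  ring

lemma segF_vanish {p q x : ℝ × ℝ} (h : x ∈ openSegment ℝ p q) : segF p q x = 0 := by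
  obtain ⟨s, t, hs, ht, hst, hx⟩ := h
  rw [← hx, segF_affine p q p q s t hst]
  simp only [segF]
  ring

lemma segF_opp {p q u v x : ℝ × ℝ} (h : x ∈ openSegment ℝ u v) (hx : segF p q x = 0)
    (hu : segF p q u ≠ 0) (hv : segF p q v ≠ 0) : segF p q u * segF p q v < 0 := by
  obtain ⟨s, t, hs, ht, hst, hxe⟩ := h
  rw [← hxe, segF_affine p q u v s t hst] at hx
  rcases hu.lt_or_gt with h1 | h1 <;> rcases hv.lt_or_gt with h2 | h2 <;> nlinarith

/-- two distinct points of the plane are apart in coordinates -/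
lemma ne_sq_pos {u v : ℝ × ℝ} (h : u ≠ v) : 0 < (u.1 - v.1)^2 + (u.2 - v.2)^2 := by
  rcases lt_or_eq_of_le (by positivity : (0:ℝ) ≤ (u.1 - v.1)^2 + (u.2 - v.2)^2) with h' | h'
  · exact h'
  · exfalso
    apply h
    have h1 : u.1 = v.1 := by nlinarith [sq_nonneg (u.1 - v.1), sq_nonneg (u.2 - v.2)]
    have h2 : u.2 = v.2 := by nlinarith [sq_nonneg (u.1 - v.1), sq_nonneg (u.2 - v.2)]
    exact Prod.ext h1 h2

/-- Core geometric lemma: if `w, z` on the unit circle are strictly on opposite sides of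
the chord `uv`, then the open chords meet. -/
lemma meet_core {u v w z : ℝ × ℝ}
    (hu : u.1^2 + u.2^2 = 1) (hv : v.1^2 + v.2^2 = 1)
    (hw : w.1^2 + w.2^2 = 1) (hz : z.1^2 + z.2^2 = 1)
    (huv : u ≠ v)
    (h1 : 0 < segF u v w) (h2 : segF u v z < 0) :
    (openSegment ℝ u v ∩ openSegment ℝ w z).Nonempty := by
  have hwz : w ≠ z := by
    intro h
    rw [h] at h1
    linarith
  obtain ⟨t, ht0, ht1, hteq⟩ :
      ∃ t : ℝ, 0 < t ∧ t < 1 ∧ (1-t) * segF u v w + t * segF u v z = 0 := by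
    have hgen : ∀ p q : ℝ, 0 < p → q < 0 →
        ∃ t : ℝ, 0 < t ∧ t < 1 ∧ (1-t) * p + t * q = 0 := by
      intro p q hp hq
      have hne : p - q ≠ 0 := by linarith
      refine ⟨p / (p - q), div_pos hp (by linarith),
        (div_lt_one (by linarith)).mpr (by linarith), ?_⟩
      field_simp
      ring
    exact hgen _ _ h1 h2
  have ht1' : 0 < 1 - t := by linarith
  set x : ℝ × ℝ := ((1-t)*w.1 + t*z.1, (1-t)*w.2 + t*z.2) with hxdef
  have hx' : (1-t) • w + t • z = x := by
    apply Prod.ext <;> simp [hxdef, Prod.smul_fst, Prod.smul_snd, smul_eq_mul]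
  have hxmem : x ∈ openSegment ℝ w z := ⟨1-t, t, ht1', ht0, by ring, hx'⟩
  have hfx : segF u v x = 0 := by
    rw [← hx', segF_affine u v w z (1-t) t (by ring)]
    exact hteq
  have heq : x.1^2 + x.2^2 = 1 - (t*(1-t)) * ((w.1-z.1)^2 + (w.2-z.2)^2) := by
    simp only [hxdef]
    linear_combination (1-t)*hw + t*hz
  have hxlt : x.1^2 + x.2^2 < 1 := by
    rw [heq]
    nlinarith [mul_pos (mul_pos ht0 ht1') (ne_sq_pos hwz)]
  -- now show x ∈ openSegment u v
  have hcol : (v.1 - u.1) * (x.2 - u.2) - (v.2 - u.2) * (x.1 - u.1) = 0 := hfx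
  clear hfx heq hteq hx'
  have hWsq : 0 < (v.1 - u.1)^2 + (v.2 - u.2)^2 := ne_sq_pos (Ne.symm huv)
  obtain ⟨s, hx1, hx2⟩ :
      ∃ s : ℝ, x.1 = u.1 + s * (v.1 - u.1) ∧ x.2 = u.2 + s * (v.2 - u.2) := by
    refine ⟨((x.1-u.1)*(v.1-u.1) + (x.2-u.2)*(v.2-u.2)) / ((v.1-u.1)^2 + (v.2-u.2)^2),
      ?_, ?_⟩
    · have e1 : ((x.1-u.1)*(v.1-u.1) + (x.2-u.2)*(v.2-u.2)) * (v.1-u.1)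
          = (x.1 - u.1) * ((v.1-u.1)^2 + (v.2-u.2)^2) := by
        linear_combination (v.2-u.2) * hcol
      rw [div_mul_eq_mul_div, e1, mul_div_assoc, div_self hWsq.ne', mul_one]
      ring
    · have e2 : ((x.1-u.1)*(v.1-u.1) + (x.2-u.2)*(v.2-u.2)) * (v.2-u.2)
          = (x.2 - u.2) * ((v.1-u.1)^2 + (v.2-u.2)^2) := by
        linear_combination (-(v.1-u.1)) * hcol
      rw [div_mul_eq_mul_div, e2, mul_div_assoc, div_self hWsq.ne', mul_one]
      ring
  rw [hx1, hx2] at hxlt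
  have heq2 : (u.1 + s*(v.1-u.1))^2 + (u.2 + s*(v.2-u.2))^2
      = 1 + ((v.1-u.1)^2 + (v.2-u.2)^2) * (s*(s-1)) := by
    linear_combination (1-s)*hu + s*hv
  rw [heq2] at hxlt
  have hss : s * (s-1) < 0 := by
    by_contra h'
    push_neg at h'
    nlinarith [mul_nonneg hWsq.le h']
  have hs0 : 0 < s := by nlinarith
  have hs1 : s < 1 := by nlinarith
  refine ⟨x, ⟨1 - s, s, by linarith, hs0, by ring, ?_⟩, hxmem⟩
  apply Prod.ext
  · show (1-s)*u.1 + s*v.1 = x.1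
    rw [hx1]; ring
  · show (1-s)*u.2 + s*v.2 = x.2
    rw [hx2]; ring

lemma regVertex_unit (m : ℕ) (j : ZMod m) :
    (regVertex m j).1^2 + (regVertex m j).2^2 = 1 := by
  simp only [regVertex]
  exact Real.cos_sq_add_sin_sq _

lemma pair_cases {α : Type*} [DecidableEq α] {x y x' y' : α}
    (h : ({x, y} : Finset α) = {x', y'}) (hne : x ≠ y) :
    (x' = x ∧ y' = y) ∨ (x' = y ∧ y' = x) := by
  have hx' : x' ∈ ({x, y} : Finset α) := by rw [h]; simp
  have hy' : y' ∈ ({x, y} : Finset α) := by rw [h]; simp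
  have hx : x ∈ ({x', y'} : Finset α) := by rw [← h]; simp
  have hy : y ∈ ({x', y'} : Finset α) := by rw [← h]; simp
  simp only [Finset.mem_insert, Finset.mem_singleton] at hx' hy' hx hy
  rcases hx' with h1 | h1 <;> rcases hy' with h2 | h2 <;> tauto

lemma pairwise4 {α : Type*} {a b c d : α}
    (h : ([a, b, c, d] : List α).Pairwise (· ≠ ·)) :
    a ≠ b ∧ a ≠ c ∧ a ≠ d ∧ b ≠ c ∧ b ≠ d ∧ c ≠ d := by
  simp only [List.pairwise_cons, List.mem_cons, List.mem_singleton, List.not_mem_nil] at h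
  obtain ⟨h1, h2, h3, -⟩ := h
  exact ⟨h1 b (by tauto), h1 c (by tauto), h1 d (by tauto),
    h2 c (by tauto), h2 d (by tauto), h3 d (by tauto)⟩



theorem openSegments_meet_iff_cross (m : ℕ) (hm : 4 ≤ m) (a b c d : ZMod m)
    (hab : IsDiag m {a, b}) (hcd : IsDiag m {c, d})
    (hdist : ([a, b, c, d] : List (ZMod m)).Pairwise (· ≠ ·)) :
    (openSegment ℝ (regVertex m a) (regVertex m b) ∩
        openSegment ℝ (regVertex m c) (regVertex m d)).Nonempty ↔
      Cross m {a, b} {c, d} := by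
  haveI : NeZero m := ⟨by omega⟩
  obtain ⟨hab1, hac, had, hbc, hbd, hcd1⟩ := pairwise4 hdist
  constructor
  · rintro ⟨x, hx1, hx2⟩
    refine ⟨a, b, c, d, rfl, rfl, hdist, ?_⟩
    have hfx : segF (regVertex m a) (regVertex m b) x = 0 := segF_vanish hx1
    rcases segF_cases m a b c hab1.symm hac.symm hbc.symm with ⟨hcIn, hcneg⟩ | ⟨hcOut, hcpos⟩ <;>
      rcases segF_cases m a b d hab1.symm had.symm hbd.symm with ⟨hdIn, hdneg⟩ | ⟨hdOut, hdpos⟩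
    · exfalso
      have := segF_opp hx2 hfx (ne_of_lt hcneg) (ne_of_lt hdneg)
      nlinarith
    · exact Or.inl ⟨hcIn, hdOut⟩
    · exact Or.inr ⟨hdIn, hcOut⟩
    · exfalso
      have := segF_opp hx2 hfx (ne_of_gt hcpos) (ne_of_gt hdpos)
      nlinarith
  · rintro ⟨a', b', c', d', he, hf, hd', hxor⟩
    obtain ⟨h1, h2, h3, h4, h5, h6⟩ := pairwise4 hd'
    have hu := regVertex_unit m a'
    have hv := regVertex_unit m b'
    have hw := regVertex_unit m c'
    have hz := regVertex_unit m d'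
    have hseg1 : openSegment ℝ (regVertex m a') (regVertex m b')
        = openSegment ℝ (regVertex m a) (regVertex m b) := by
      rcases pair_cases he hab1 with ⟨e1, e2⟩ | ⟨e1, e2⟩
      · rw [e1, e2]
      · rw [e1, e2, openSegment_symm]
    have hseg2 : openSegment ℝ (regVertex m c') (regVertex m d')
        = openSegment ℝ (regVertex m c) (regVertex m d) := by
      rcases pair_cases hf hcd1 with ⟨e1, e2⟩ | ⟨e1, e2⟩
      · rw [e1, e2]
      · rw [e1, e2, openSegment_symm]
    rcases hxor with ⟨hcIn, hdOut⟩ | ⟨hdIn, hcOut⟩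
    · rcases segF_cases m a' b' c' h1.symm h2.symm h4.symm with ⟨_, hcneg⟩ | ⟨hc2, _⟩
      swap
      · exact absurd hcIn hc2
      rcases segF_cases m a' b' d' h1.symm h3.symm h5.symm with ⟨hd2, _⟩ | ⟨_, hdpos⟩
      · exact absurd hd2 hdOut
      have huv : regVertex m a' ≠ regVertex m b' := by
        intro h
        rw [h] at hcneg
        simp [segF] at hcneg
      obtain ⟨x, hx1, hx2⟩ := meet_core hu hv hz hw huv hdpos hcneg
      rw [openSegment_symm, hseg2] at hx2
      rw [hseg1] at hx1
      exact ⟨x, hx1, hx2⟩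
    · rcases segF_cases m a' b' d' h1.symm h3.symm h5.symm with ⟨_, hdneg⟩ | ⟨hd2, _⟩
      swap
      · exact absurd hdIn hd2
      rcases segF_cases m a' b' c' h1.symm h2.symm h4.symm with ⟨hc2, _⟩ | ⟨_, hcpos⟩
      · exact absurd hc2 hcOut
      have huv : regVertex m a' ≠ regVertex m b' := by
        intro h
        rw [h] at hdneg
        simp [segF] at hdneg
      obtain ⟨x, hx1, hx2⟩ := meet_core hu hv hw hz huv hcpos hdneg
      rw [hseg2] at hx2
      rw [hseg1] at hx1
      exact ⟨x, hx1, hx2⟩
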